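/- Let p > 1, c, e ∈ L¹([0,T], ℝ≥0), and let x ∈ W^{1,1}([0,T], ℝ≥0) ∩ C⁰([0,T], ℝ≥0) satisfy ẋ ≤ c(t)x^p + e(t) with x(0) = x₀ ≥ 0. Then for all t ∈ [0,T] such that (p−1)·(x₀ + ∫₀ᵗ e(s) ds)^{p−1} · ∫₀ᵗ c(s) ds < 1, one has x(t) ≤ (x₀ + ∫₀ᵗ e(s) ds) · (1 − (p−1)(x₀ + ∫₀ᵗ e(s) ds)^{p−1} ∫₀ᵗ c(s) ds)^{−1/(p−1)}. -/

import Mathlib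

open MeasureTheory Set intervalIntegral

lemma subst_ineq (t : ℝ) (ht : 0 ≤ t) (A : ℝ) (ρ h : ℝ → ℝ)
    (hρ : IntegrableOn ρ (Icc 0 t)) (hρnn : ∀ u ∈ Icc (0:ℝ) t, 0 ≤ ρ u)
    (hh : Continuous h) (hhnn : ∀ y, 0 ≤ h y) (hha : Antitone h) :
    (∫ y in A..(A + ∫ u in (0:ℝ)..t, ρ u), h y) ≤
      ∫ u in (0:ℝ)..t, h (A + ∫ r in (0:ℝ)..u, ρ r) * ρ u := by
  set W : ℝ → ℝ := fun s => A + ∫ r in (0:ℝ)..s, ρ r with hWdef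
  have hρint : ∀ a b : ℝ, a ∈ Icc (0:ℝ) t → b ∈ Icc (0:ℝ) t → IntervalIntegrable ρ volume a b := by
    intro a b ha hb
    exact (hρ.mono_set (uIcc_subset_Icc ha hb)).intervalIntegrable
  have hWc : ContinuousOn W (Icc 0 t) := by
    have h1 : IntegrableOn ρ (uIcc (0:ℝ) t) := by rwa [uIcc_of_le ht]
    have := intervalIntegral.continuousOn_primitive_interval (μ := volume) h1
    rw [uIcc_of_le ht] at this
    exact continuousOn_const.add this
  have hWadd : ∀ a b : ℝ, a ∈ Icc (0:ℝ) t → b ∈ Icc (0:ℝ) t →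
      W b - W a = ∫ r in a..b, ρ r := by
    intro a b ha hb
    have h1 := intervalIntegral.integral_add_adjacent_intervals
      (hρint 0 a (left_mem_Icc.2 ht) ha) (hρint a b ha hb)
    simp only [hWdef]
    rw [← h1]; ring
  have hWmono : ∀ a b : ℝ, a ∈ Icc (0:ℝ) t → b ∈ Icc (0:ℝ) t → a ≤ b → W a ≤ W b := by
    intro a b ha hb hab
    have h1 : 0 ≤ ∫ r in a..b, ρ r :=
      intervalIntegral.integral_nonneg hab fun u hu =>
        hρnn u ⟨le_trans ha.1 hu.1, le_trans hu.2 hb.2⟩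
    have := hWadd a b ha hb
    linarith
  have hWA : W 0 = A := by simp [hWdef]
  have hfi : ∀ a b : ℝ, a ∈ Icc (0:ℝ) t → b ∈ Icc (0:ℝ) t →
      IntervalIntegrable (fun u => h (W u) * ρ u) volume a b := by
    intro a b ha hb
    exact (hρint a b ha hb).continuousOn_mul
      (hh.comp_continuousOn (hWc.mono (uIcc_subset_Icc ha hb)))
  have hmem0 : (0:ℝ) ∈ Icc (0:ℝ) t := left_mem_Icc.2 ht
  have hmemt : t ∈ Icc (0:ℝ) t := right_mem_Icc.2 ht
  -- rewrite goal in terms of W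
  have hgoal : (∫ y in A..(A + ∫ u in (0:ℝ)..t, ρ u), h y) = ∫ y in A..(W t), h y := rfl
  rw [hgoal]
  refine le_of_forall_pos_le_add fun δ hδ => ?_
  have hhA1 : (0:ℝ) < h A + 1 := by have := hhnn A; linarith
  set η : ℝ := δ / (h A + 1) with hηdef
  have hη0 : 0 < η := div_pos hδ hhA1
  obtain ⟨δ', hδ'0, hδ'⟩ := Metric.uniformContinuousOn_iff.mp
    (isCompact_Icc.uniformContinuousOn_of_continuous hWc) η hη0
  obtain ⟨n, hn⟩ := exists_nat_gt (t / δ')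
  have hn0 : 0 < (n:ℝ) := lt_of_le_of_lt (div_nonneg ht hδ'0.le) hn
  set s : ℕ → ℝ := fun i => i * (t / n) with hsdef
  have hs0 : s 0 = 0 := by simp [hsdef]
  have hsn : s n = t := by
    simp only [hsdef]
    field_simp
  have hsmem : ∀ i : ℕ, i ≤ n → s i ∈ Icc (0:ℝ) t := by
    intro i hi
    constructor
    · exact mul_nonneg (Nat.cast_nonneg i) (div_nonneg ht hn0.le)
    · calc (i:ℝ) * (t / n) ≤ n * (t / n) :=
            mul_le_mul_of_nonneg_right (Nat.cast_le.2 hi) (div_nonneg ht hn0.le)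
      _ = t := by field_simp
  have hstep : ∀ i : ℕ, s (i + 1) - s i = t / n := by
    intro i; simp only [hsdef]; push_cast; ring
  have hslt : t / n < δ' := (div_lt_iff₀ hn0).2 ((div_lt_iff₀ hδ'0).1 hn |>.trans_eq (mul_comm _ _))
  have hsle : ∀ i : ℕ, s i ≤ s (i + 1) := by
    intro i
    have := hstep i
    have h2 : 0 ≤ t / n := div_nonneg ht hn0.le
    linarith
  have hWstep : ∀ i : ℕ, i < n → W (s (i + 1)) - W (s i) < η := by
    intro i hi
    have h1 := hδ' (s (i + 1)) (hsmem _ hi) (s i) (hsmem _ hi.le)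
      (by rw [Real.dist_eq, hstep i, abs_of_nonneg (div_nonneg ht hn0.le)]; exact hslt)
    rw [Real.dist_eq] at h1
    calc W (s (i + 1)) - W (s i) ≤ |W (s (i + 1)) - W (s i)| := le_abs_self _
    _ < η := h1
  -- decompose both integrals along the partition
  have hd1 : (∫ u in (0:ℝ)..t, h (W u) * ρ u) =
      ∑ i ∈ Finset.range n, ∫ u in s i..s (i + 1), h (W u) * ρ u := by
    rw [intervalIntegral.sum_integral_adjacent_intervals
      (fun i hi => hfi _ _ (hsmem _ hi.le) (hsmem _ hi))]
    rw [hs0, hsn]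
  have hd2 : (∫ y in A..(W t), h y) =
      ∑ i ∈ Finset.range n, ∫ y in W (s i)..W (s (i + 1)), h y := by
    rw [intervalIntegral.sum_integral_adjacent_intervals
      (a := fun i => W (s i)) (fun i _ => hh.intervalIntegrable _ _)]
    rw [hs0, hsn, hWA]
  have key : ∀ i ∈ Finset.range n,
      (∫ y in W (s i)..W (s (i + 1)), h y) ≤
        (∫ u in s i..s (i + 1), h (W u) * ρ u) +
          (h (W (s i)) - h (W (s (i + 1)))) * η := by
    intro i hi
    rw [Finset.mem_range] at hi
    have hmi := hsmem i hi.le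
    have hmi1 := hsmem (i + 1) hi
    have hWle : W (s i) ≤ W (s (i + 1)) := hWmono _ _ hmi hmi1 (hsle i)
    have hΔ : W (s (i + 1)) - W (s i) = ∫ r in s i..s (i + 1), ρ r := hWadd _ _ hmi hmi1
    have hΔnn : 0 ≤ W (s (i + 1)) - W (s i) := by linarith
    have c1 : (∫ y in W (s i)..W (s (i + 1)), h y) ≤
        h (W (s i)) * (W (s (i + 1)) - W (s i)) := by
      have := intervalIntegral.integral_mono_on hWle (hh.intervalIntegrable _ _)
        (intervalIntegrable_const (μ := volume)) (fun y hy => hha hy.1)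
      rwa [intervalIntegral.integral_const, smul_eq_mul, mul_comm] at this
    have c2 : h (W (s (i + 1))) * (W (s (i + 1)) - W (s i)) ≤
        ∫ u in s i..s (i + 1), h (W u) * ρ u := by
      have h1 : h (W (s (i + 1))) * (W (s (i + 1)) - W (s i)) =
          ∫ u in s i..s (i + 1), h (W (s (i + 1))) * ρ u := by
        rw [intervalIntegral.integral_const_mul, ← hΔ]
      rw [h1]
      refine intervalIntegral.integral_mono_on (hsle i)
        ((hρint _ _ hmi hmi1).const_mul _) (hfi _ _ hmi hmi1) (fun u hu => ?_)
      have humem : u ∈ Icc (0:ℝ) t := ⟨le_trans hmi.1 hu.1, le_trans hu.2 hmi1.2⟩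
      have : W u ≤ W (s (i + 1)) := hWmono _ _ humem hmi1 hu.2
      exact mul_le_mul_of_nonneg_right (hha this) (hρnn u humem)
    have c3 : (h (W (s i)) - h (W (s (i + 1)))) * (W (s (i + 1)) - W (s i)) ≤
        (h (W (s i)) - h (W (s (i + 1)))) * η := by
      refine mul_le_mul_of_nonneg_left (le_of_lt (hWstep i hi)) ?_
      have := hha hWle
      linarith
    nlinarith [c1, c2, c3]
  calc (∫ y in A..(W t), h y)
      = ∑ i ∈ Finset.range n, ∫ y in W (s i)..W (s (i + 1)), h y := hd2
    _ ≤ ∑ i ∈ Finset.range n, ((∫ u in s i..s (i + 1), h (W u) * ρ u) +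
          (h (W (s i)) - h (W (s (i + 1)))) * η) := Finset.sum_le_sum key
    _ = (∑ i ∈ Finset.range n, ∫ u in s i..s (i + 1), h (W u) * ρ u) +
          (∑ i ∈ Finset.range n, (h (W (s i)) - h (W (s (i + 1))))) * η := by
        rw [Finset.sum_add_distrib, Finset.sum_mul]
    _ = (∫ u in (0:ℝ)..t, h (W u) * ρ u) + (h (W (s 0)) - h (W (s n))) * η := by
        rw [← hd1, Finset.sum_range_sub' (fun i => h (W (s i)))]
    _ ≤ (∫ u in (0:ℝ)..t, h (W u) * ρ u) + δ := by
        have h1 : h (W (s 0)) - h (W (s n)) ≤ h A + 1 := by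
          rw [hs0, hWA]
          have := hhnn (W (s n))
          linarith
        have h2 : (h (W (s 0)) - h (W (s n))) * η ≤ (h A + 1) * η := by
          refine mul_le_mul_of_nonneg_right h1 hη0.le
        have h3 : (h A + 1) * η = δ := by
          rw [hηdef]; field_simp
        linarith

/-- CP-Type I: explicit upper bound for `ẋ ≤ c(t)x^p + e(t)`. -/
theorem cp_type_I (T : ℝ) (hT : 0 ≤ T) (p : ℝ) (hp : 1 < p)
    (c e x x' : ℝ → ℝ) (x₀ : ℝ) (hx₀ : 0 ≤ x₀)
    (hc : IntegrableOn c (Icc 0 T)) (hcnn : ∀ t ∈ Icc (0:ℝ) T, 0 ≤ c t)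
    (he : IntegrableOn e (Icc 0 T)) (henn : ∀ t ∈ Icc (0:ℝ) T, 0 ≤ e t)
    (hxnn : ∀ t ∈ Icc (0:ℝ) T, 0 ≤ x t)
    (hx' : IntegrableOn x' (Icc 0 T)) (hxc : ContinuousOn x (Icc 0 T))
    (hxAC : ∀ t ∈ Icc (0:ℝ) T, x t = x 0 + ∫ s in (0:ℝ)..t, x' s)
    (hineq : ∀ᵐ t ∂(volume.restrict (Icc (0:ℝ) T)), x' t ≤ c t * x t ^ p + e t)
    (hx0 : x 0 = x₀) :
    ∀ t ∈ Icc (0:ℝ) T,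
      (p - 1) * (x₀ + ∫ s in (0:ℝ)..t, e s) ^ (p - 1) * (∫ s in (0:ℝ)..t, c s) < 1 →
      x t ≤ (x₀ + ∫ s in (0:ℝ)..t, e s) *
        (1 - (p - 1) * (x₀ + ∫ s in (0:ℝ)..t, e s) ^ (p - 1) *
          (∫ s in (0:ℝ)..t, c s)) ^ (-(1 / (p - 1))) := by
  intro t ht hcond
  have hp0 : (0:ℝ) < p := lt_trans one_pos hp
  have hp1 : p - 1 ≠ 0 := by linarith
  have ht0 : 0 ≤ t := ht.1
  have hsub : Icc (0:ℝ) t ⊆ Icc (0:ℝ) T := Icc_subset_Icc le_rfl ht.2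
  set M : ℝ := x₀ + ∫ s in (0:ℝ)..t, e s with hMdef
  set C : ℝ := ∫ s in (0:ℝ)..t, c s with hCdef
  -- interval integrability helpers on subintervals of [0,T]
  have hii : ∀ f : ℝ → ℝ, IntegrableOn f (Icc 0 T) → ∀ a b : ℝ, a ∈ Icc (0:ℝ) T →
      b ∈ Icc (0:ℝ) T → IntervalIntegrable f volume a b := by
    intro f hf a b ha hb
    exact (hf.mono_set (uIcc_subset_Icc ha hb)).intervalIntegrable
  have hmem0 : (0:ℝ) ∈ Icc (0:ℝ) T := left_mem_Icc.2 hT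
  have htT : t ∈ Icc (0:ℝ) T := ht
  have hC0 : 0 ≤ C :=
    intervalIntegral.integral_nonneg ht0 fun u hu => hcnn u (hsub hu)
  have hM0 : 0 ≤ M := by
    have : 0 ≤ ∫ s in (0:ℝ)..t, e s :=
      intervalIntegral.integral_nonneg ht0 fun u hu => henn u (hsub hu)
    simp only [hMdef]; linarith
  -- bound for x
  obtain ⟨m, hmmem, hmax⟩ := isCompact_Icc.exists_isMaxOn ⟨0, hmem0⟩ hxc
  set K : ℝ := x m with hKdef
  have hK : ∀ u ∈ Icc (0:ℝ) T, x u ≤ K := fun u hu => hmax hu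
  have hK0 : 0 ≤ K := hxnn m hmmem
  -- the quadratic density
  set ρ : ℝ → ℝ := fun u => c u * x u ^ p with hρdef
  have hρnn : ∀ u ∈ Icc (0:ℝ) T, 0 ≤ ρ u := fun u hu =>
    mul_nonneg (hcnn u hu) (Real.rpow_nonneg (hxnn u hu) p)
  have hρI : IntegrableOn ρ (Icc 0 T) := by
    have hxm : AEMeasurable x (volume.restrict (Icc (0:ℝ) T)) :=
      hxc.aemeasurable measurableSet_Icc
    have hxpm : AEMeasurable (fun u => x u ^ p) (volume.restrict (Icc (0:ℝ) T)) :=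
      hxm.pow aemeasurable_const
    have hmeas : AEStronglyMeasurable ρ (volume.restrict (Icc (0:ℝ) T)) :=
      (hc.aemeasurable.mul hxpm).aestronglyMeasurable
    refine Integrable.mono' (hc.mul_const (K ^ p)) hmeas ?_
    filter_upwards [ae_restrict_mem measurableSet_Icc] with u hu
    have h1 : 0 ≤ x u ^ p := Real.rpow_nonneg (hxnn u hu) p
    have h2 : x u ^ p ≤ K ^ p := Real.rpow_le_rpow (hxnn u hu) (hK u hu) hp0.le
    rw [Real.norm_eq_abs, abs_mul, abs_of_nonneg (hcnn u hu), abs_of_nonneg h1]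
    exact mul_le_mul_of_nonneg_left h2 (hcnn u hu)
  -- x s ≤ W s := M + ∫_0^s ρ  on [0,t]
  have hWge : ∀ s ∈ Icc (0:ℝ) t, (0:ℝ) ≤ ∫ r in (0:ℝ)..s, ρ r := by
    intro s hs
    exact intervalIntegral.integral_nonneg hs.1 fun u hu =>
      hρnn u (hsub ⟨hu.1, le_trans hu.2 hs.2⟩)
  have hxW : ∀ s ∈ Icc (0:ℝ) t, x s ≤ M + ∫ r in (0:ℝ)..s, ρ r := by
    intro s hs
    have hsT : s ∈ Icc (0:ℝ) T := hsub hs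
    have h1 : x s = x₀ + ∫ r in (0:ℝ)..s, x' r := by rw [hxAC s hsT, hx0]
    have h2 : (∫ r in (0:ℝ)..s, x' r) ≤ ∫ r in (0:ℝ)..s, (ρ r + e r) := by
      refine intervalIntegral.integral_mono_ae_restrict hs.1
        (hii x' hx' 0 s hmem0 hsT)
        (((hii ρ hρI 0 s hmem0 hsT)).add (hii e he 0 s hmem0 hsT)) ?_
      exact ae_restrict_of_ae_restrict_of_subset (Icc_subset_Icc le_rfl hsT.2) hineq
    have h3 : (∫ r in (0:ℝ)..s, (ρ r + e r)) =
        (∫ r in (0:ℝ)..s, ρ r) + ∫ r in (0:ℝ)..s, e r :=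
      intervalIntegral.integral_add (hii ρ hρI 0 s hmem0 hsT) (hii e he 0 s hmem0 hsT)
    have h4 : (∫ r in (0:ℝ)..s, e r) ≤ ∫ r in (0:ℝ)..t, e r := by
      have hadd := intervalIntegral.integral_add_adjacent_intervals
        (hii e he 0 s hmem0 hsT) (hii e he s t hsT htT)
      have h5 : 0 ≤ ∫ r in s..t, e r :=
        intervalIntegral.integral_nonneg hs.2 fun u hu =>
          henn u ⟨le_trans hs.1 hu.1, le_trans hu.2 ht.2⟩
      linarith
    simp only [hMdef]
    linarith
  -- main estimate for shifted initial data
  have hmain : ∀ ε : ℝ, 0 < ε → (p - 1) * (M + ε) ^ (p - 1) * C < 1 →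
      x t ≤ (M + ε) * (1 - (p - 1) * (M + ε) ^ (p - 1) * C) ^ (-(1 / (p - 1))) := by
    intro ε hε hcondε
    have hMε : 0 < M + ε := by linarith
    set D : ℝ := 1 - (p - 1) * (M + ε) ^ (p - 1) * C with hDdef
    have hD0 : 0 < D := by simp only [hDdef]; linarith
    -- the antitone weight
    set h : ℝ → ℝ := fun y => (max y 0 + ε) ^ (-p) with hhdef
    have hbase : ∀ y : ℝ, 0 < max y 0 + ε := fun y =>
      lt_of_lt_of_le hε (by simp [le_max_right, le_add_iff_nonneg_left, le_max_right])
    have hhc : Continuous h := by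
      refine Continuous.rpow_const ?_ fun y => Or.inl (ne_of_gt (hbase y))
      exact (continuous_id.max continuous_const).add continuous_const
    have hhnn : ∀ y, 0 ≤ h y := fun y => Real.rpow_nonneg (hbase y).le _
    have hha : Antitone h := by
      intro a b hab
      exact Real.rpow_le_rpow_of_nonpos (hbase a)
        (by gcongr) (neg_nonpos.2 hp0.le)
    have hS := subst_ineq t ht0 M ρ h (hρI.mono_set hsub)
      (fun u hu => hρnn u (hsub hu)) hhc hhnn hha
    set W : ℝ → ℝ := fun s => M + ∫ r in (0:ℝ)..s, ρ r with hWdef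
    have hWt : W t = M + ∫ u in (0:ℝ)..t, ρ u := rfl
    have hWtM : M ≤ W t := by have := hWge t (right_mem_Icc.2 ht0); simp only [hWdef]; linarith
    have hWc : ContinuousOn W (Icc 0 t) := by
      have h1 : IntegrableOn ρ (uIcc (0:ℝ) t) := by
        rw [uIcc_of_le ht0]; exact hρI.mono_set hsub
      have := intervalIntegral.continuousOn_primitive_interval (μ := volume) h1
      rw [uIcc_of_le ht0] at this
      exact continuousOn_const.add this
    -- RHS of hS is at most C
    have hRHS : (∫ u in (0:ℝ)..t, h (W u) * ρ u) ≤ C := by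
      have hfint : IntervalIntegrable (fun u => h (W u) * ρ u) volume 0 t := by
        refine IntervalIntegrable.continuousOn_mul ?_ (hhc.comp_continuousOn ?_)
        · exact ((hρI.mono_set hsub).mono_set (by rw [uIcc_of_le ht0])).intervalIntegrable
        · exact hWc.mono (by rw [uIcc_of_le ht0])
      refine intervalIntegral.integral_mono_on ht0 hfint (hii c hc 0 t hmem0 htT) ?_
      intro u hu
      have huT : u ∈ Icc (0:ℝ) T := hsub hu
      have hWu0 : 0 ≤ W u := by
        have := hWge u hu; simp only [hWdef]; linarith
      have hWuε : 0 < W u + ε := by linarith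
      have hxu : x u ≤ W u := hxW u hu
      have hh1 : h (W u) = (W u + ε) ^ (-p) := by
        simp only [hhdef, max_eq_left hWu0]
      have hρu : ρ u ≤ c u * (W u + ε) ^ p := by
        refine mul_le_mul_of_nonneg_left ?_ (hcnn u huT)
        exact Real.rpow_le_rpow (hxnn u huT) (by linarith) hp0.le
      calc h (W u) * ρ u ≤ h (W u) * (c u * (W u + ε) ^ p) :=
            mul_le_mul_of_nonneg_left hρu (hhnn _)
        _ = c u * ((W u + ε) ^ (-p) * (W u + ε) ^ p) := by rw [hh1]; ring
        _ = c u := by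
            rw [← Real.rpow_add hWuε, neg_add_cancel, Real.rpow_zero, mul_one]
    -- LHS of hS equals the explicit expression
    have hLHS : (∫ y in M..(W t), h y) =
        (p - 1)⁻¹ * ((M + ε) ^ (1 - p) - (W t + ε) ^ (1 - p)) := by
      have hcg : ∀ y ∈ uIcc M (W t), h y = (y + ε) ^ (-p) := by
        intro y hy
        rw [uIcc_of_le hWtM] at hy
        simp only [hhdef, max_eq_left (le_trans hM0 hy.1)]
      rw [intervalIntegral.integral_congr hcg]
      have hne : (1:ℝ) - p ≠ 0 := by intro hc0; apply hp1; linarith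
      have hderiv : ∀ y ∈ uIcc M (W t),
          HasDerivAt (fun z => (1 - p)⁻¹ * (z + ε) ^ (1 - p)) ((y + ε) ^ (-p)) y := by
        intro y hy
        rw [uIcc_of_le hWtM] at hy
        have hy0 : 0 < y + ε := by have := hy.1; linarith
        have h1 : HasDerivAt (fun z : ℝ => z ^ (1 - p)) ((1 - p) * (y + ε) ^ (1 - p - 1))
            (y + ε) := Real.hasDerivAt_rpow_const (Or.inl (ne_of_gt hy0))
        have h2 : HasDerivAt (fun z : ℝ => z + ε) 1 y := (hasDerivAt_id y).add_const ε
        have h3 := (h1.comp y h2).const_mul (1 - p)⁻¹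
        refine h3.congr_deriv ?_
        have he1 : (1:ℝ) - p - 1 = -p := by ring
        rw [he1, mul_one, ← mul_assoc, inv_mul_cancel₀ hne, one_mul]
      have hint : IntervalIntegrable (fun y => (y + ε) ^ (-p)) volume M (W t) := by
        refine ContinuousOn.intervalIntegrable (ContinuousOn.rpow_const
          ((continuous_id.add continuous_const).continuousOn) fun y hy => ?_)
        rw [uIcc_of_le hWtM] at hy
        exact Or.inl (by have := hy.1; intro hc0; linarith)
      rw [intervalIntegral.integral_eq_sub_of_hasDerivAt hderiv hint]
      field_simp
      ring
    -- combine
    have hchain : (p - 1)⁻¹ * ((M + ε) ^ (1 - p) - (W t + ε) ^ (1 - p)) ≤ C := by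
      rw [← hLHS]; exact le_trans hS hRHS
    have hWtε : 0 < W t + ε := by linarith
    have hppos : 0 < p - 1 := by linarith
    have hXge : (M + ε) ^ (1 - p) - (p - 1) * C ≤ (W t + ε) ^ (1 - p) := by
      have h6 := mul_le_mul_of_nonneg_left hchain hppos.le
      rw [← mul_assoc, mul_inv_cancel₀ (ne_of_gt hppos), one_mul] at h6
      linarith
    have hprod : (M + ε) ^ (1 - p) * (M + ε) ^ (p - 1) = 1 := by
      rw [← Real.rpow_add hMε]; norm_num
    have hR : (M + ε) ^ (1 - p) - (p - 1) * C = (M + ε) ^ (1 - p) * D := by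
      simp only [hDdef]
      linear_combination (p - 1) * C * hprod
    have hRpos : 0 < (M + ε) ^ (1 - p) * D :=
      mul_pos (Real.rpow_pos_of_pos hMε _) hD0
    have hq : -(1 / (p - 1)) ≤ 0 := by
      have : 0 < 1 / (p - 1) := by positivity
      linarith
    have h7 : ((W t + ε) ^ (1 - p)) ^ (-(1 / (p - 1))) ≤
        ((M + ε) ^ (1 - p) * D) ^ (-(1 / (p - 1))) := by
      refine Real.rpow_le_rpow_of_nonpos hRpos ?_ hq
      rw [← hR]; exact hXge
    have hqe : (1 - p) * (-(1 / (p - 1))) = 1 := by field_simp; ring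
    have h8 : ((W t + ε) ^ (1 - p)) ^ (-(1 / (p - 1))) = W t + ε := by
      rw [← Real.rpow_mul hWtε.le, hqe, Real.rpow_one]
    have h9 : ((M + ε) ^ (1 - p) * D) ^ (-(1 / (p - 1))) =
        (M + ε) * D ^ (-(1 / (p - 1))) := by
      rw [Real.mul_rpow (Real.rpow_nonneg hMε.le _) hD0.le,
        ← Real.rpow_mul hMε.le, hqe, Real.rpow_one]
    have h10 : W t + ε ≤ (M + ε) * D ^ (-(1 / (p - 1))) := by
      rw [← h9, ← h8]; exact h7
    have h11 : x t ≤ W t := hxW t (right_mem_Icc.2 ht0)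
    linarith
  -- pass to the limit ε → 0⁺
  set q : ℝ := -(1 / (p - 1)) with hqdef
  set g : ℝ → ℝ := fun ε => (M + ε) * (1 - (p - 1) * (M + ε) ^ (p - 1) * C) ^ q
    with hgdef
  have hg0 : g 0 = M * (1 - (p - 1) * M ^ (p - 1) * C) ^ q := by
    simp only [hgdef, add_zero]
  have hDcont : ContinuousAt (fun ε : ℝ => 1 - (p - 1) * (M + ε) ^ (p - 1) * C) 0 := by
    have h1 : ContinuousAt (fun ε : ℝ => M + ε) 0 :=
      (continuous_const.add continuous_id).continuousAt
    have h2 : ContinuousAt (fun z : ℝ => z ^ (p - 1)) (M + 0) :=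
      Real.continuousAt_rpow_const _ _ (Or.inr (by linarith))
    have h3 : ContinuousAt (fun ε : ℝ => (M + ε) ^ (p - 1)) 0 := h2.comp h1
    exact continuousAt_const.sub ((continuousAt_const.mul h3).mul continuousAt_const)
  have hD00 : (1 : ℝ) - (p - 1) * (M + 0) ^ (p - 1) * C > 0 := by
    rw [add_zero]; linarith
  have hgcont : ContinuousAt g 0 := by
    have h1 : ContinuousAt (fun z : ℝ => z ^ q)
        (1 - (p - 1) * (M + 0) ^ (p - 1) * C) :=
      Real.continuousAt_rpow_const _ _ (Or.inl (ne_of_gt hD00))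
    have h2 : ContinuousAt (fun ε : ℝ => (1 - (p - 1) * (M + ε) ^ (p - 1) * C) ^ q) 0 :=
      hDcont.rpow_const (Or.inl (ne_of_gt hD00))
    exact ((continuous_const.add continuous_id).continuousAt).mul h2
  have hev : ∀ᶠ ε in nhdsWithin (0:ℝ) (Ioi 0), x t ≤ g ε := by
    have h1 : ∀ᶠ ε in nhds (0:ℝ), (p - 1) * (M + ε) ^ (p - 1) * C < 1 := by
      have h2 : ContinuousAt (fun ε : ℝ => (p - 1) * (M + ε) ^ (p - 1) * C) 0 := by
        have h3 : (fun ε : ℝ => (p - 1) * (M + ε) ^ (p - 1) * C) =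
            fun ε : ℝ => -((1 - (p - 1) * (M + ε) ^ (p - 1) * C) - 1) := by
          funext ε; ring
        rw [h3]
        exact (hDcont.sub continuousAt_const).neg
      exact h2.tendsto.eventually_lt_const (by rw [add_zero]; exact hcond)
    filter_upwards [eventually_nhdsWithin_of_eventually_nhds h1, self_mem_nhdsWithin]
      with ε h1' h2'
    exact hmain ε h2' h1'
  have htend : Filter.Tendsto g (nhdsWithin (0:ℝ) (Ioi 0)) (nhds (g 0)) :=
    hgcont.continuousWithinAt.tendsto
  have := ge_of_tendsto htend hev
  rw [hg0] at this
  exact this
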